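/- arXiv:2102.01440 — 5 statements merged into one kernel-verified Lean document; each statement's English description precedes it below -/
import Mathlib

section
/- Let J = (V, D, H) be a weakly winning justification, S a set of nodes closed under incoming edges of D (if v ∈ S and (w, v) ∈ D then w ∈ S), and H_f an arbitrary function mapping nodes of S to players. Then J' = J[v : ∅, H_f(v) | v ∈ S] is weakly winning, and J' contains no cycle that is not already a cycle of J. -/
attribute [local instance] Classical.propDecidable

noncomputable section

/-- A parity game: an edge relation `E`, an owner function, a priority
function; every node has at least one outgoing edge. -/
structure ParityGame (V : Type*) where
  E : V → V → Prop
  owner : V → Fin 2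
  pr : V → ℕ
  exists_succ : ∀ v, ∃ w, E v w

namespace ParityGame

variable {V : Type*}

/-- An infinite sequence of nodes following the relation `R`. -/
def IsInfPath (R : V → V → Prop) (π : ℕ → V) : Prop :=
  ∀ i, R (π i) (π (i + 1))

/-- `ρ 0, …, ρ n` is a finite sequence of nodes following `R`. -/
def IsFinPath (R : V → V → Prop) (ρ : ℕ → V) (n : ℕ) : Prop :=
  ∀ i < n, R (ρ i) (ρ (i + 1))

/-- A cycle following `R`: a nonempty finite path ending in its starting node. -/
def IsCycle (R : V → V → Prop) (ρ : ℕ → V) (n : ℕ) : Prop :=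
  0 < n ∧ IsFinPath R ρ n ∧ ρ n = ρ 0

/-- `w` is reachable from `v` following `R` (in zero or more steps). -/
def Reaches (R : V → V → Prop) (v w : V) : Prop :=
  Relation.ReflTransGen R v w

open Fin.NatCast in
/-- The infinite play `π` is won by player `α`: the highest priority
occurring infinitely often in the play has parity `α`. -/
def InfWonBy (G : ParityGame V) (π : ℕ → V) (α : Fin 2) : Prop :=
  ∃ p : ℕ, {i | G.pr (π i) = p}.Infinite ∧
    (∀ q : ℕ, {i | G.pr (π i) = q}.Infinite → q ≤ p) ∧ (p : Fin 2) = α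

/-- A play is consistent with a (partial, memoryless) strategy given as a set
of edges: whenever the play is at a node where the strategy selects an edge,
the play follows that edge. -/
def Consistent (σ : V → V → Prop) (π : ℕ → V) : Prop :=
  ∀ i u, σ (π i) u → π (i + 1) = u

/-- Consistency of a finite play `ρ 0, …, ρ n` with a strategy. -/
def ConsistentFin (σ : V → V → Prop) (ρ : ℕ → V) (n : ℕ) : Prop :=
  ∀ i < n, ∀ u, σ (ρ i) u → ρ (i + 1) = u

open Fin.NatCast in
/-- The default hypothesis: each node is won by the parity of its priority. -/
def Hd (G : ParityGame V) (v : V) : Fin 2 := (G.pr v : Fin 2)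

/-- `dj` is a direct justification for player `α` to win node `v`: a set
containing exactly one outgoing edge of `v` if `α` owns `v`, and all outgoing
edges of `v` otherwise. -/
def IsDJ (G : ParityGame V) (v : V) (α : Fin 2) (dj : Set (V × V)) : Prop :=
  (G.owner v = α → ∃ w, G.E v w ∧ dj = {(v, w)}) ∧
  (G.owner v ≠ α → dj = {p | p.1 = v ∧ G.E v p.2})

/-- `dj` wins `v` for `α` under hypothesis `H`. -/
def WinsDJ (G : ParityGame V) (H : V → Fin 2) (v : V) (α : Fin 2)
    (dj : Set (V × V)) : Prop :=
  G.IsDJ v α dj ∧ ∀ p ∈ dj, H p.2 = α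

/-- The parity game obtained from `G` and the parameter function `P` by
replacing, in every parameter `v`, the outgoing edges of `v` by the self-loop
`(v, v)` and the priority of `v` by its assigned winner `P v`. -/
def paramGame (G : ParityGame V) (P : V → Option (Fin 2)) : ParityGame V where
  E := fun v w => if P v = none then G.E v w else w = v
  owner := G.owner
  pr := fun v => (P v).elim (G.pr v) Fin.val
  exists_succ := fun v => by
    by_cases h : P v = none
    · obtain ⟨w, hw⟩ := G.exists_succ v
      exact ⟨w, by simp [h, hw]⟩
    · exact ⟨v, by simp [h]⟩

/-- A justification for `G`: a subgraph `D` together with a hypothesis `H`. -/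
structure Justification (G : ParityGame V) where
  D : V → V → Prop
  H : V → Fin 2

variable {G : ParityGame V}

namespace Justification

/-- `v` is justified in `J`: it has an outgoing edge in `D`. -/
def Justified (J : Justification G) (v : V) : Prop := ∃ w, J.D v w

/-- The set of outgoing edges of `v` in `D`. -/
def outEdges (J : Justification G) (v : V) : Set (V × V) :=
  {p | p.1 = v ∧ J.D v p.2}

/-- `J` is weakly winning: the outgoing edges of every justified node `v`
form a direct justification winning `v` for `H v` under `H`. -/
def WeaklyWinning (J : Justification G) : Prop :=
  ∀ v, J.Justified v → G.WinsDJ J.H v (J.H v) (J.outEdges v)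

/-- `J` is winning: weakly winning, and every infinite path in `D` is a play
of `G` won by the hypothetical winner of its nodes. -/
def Winning (J : Justification G) : Prop :=
  J.WeaklyWinning ∧
    ∀ π : ℕ → V, IsInfPath J.D π → G.InfWonBy π (J.H (π 0))

/-- The parameter function `P_J`: the restriction of `H` to the unjustified
nodes of `J`. -/
def param (J : Justification G) (v : V) : Option (Fin 2) :=
  if J.Justified v then none else some (J.H v)

/-- The strategy `σ_{J,α}`: the set of edges `(v, w) ∈ D` with
`O v = H v = α`. -/
def strat (J : Justification G) (α : Fin 2) : V → V → Prop :=
  fun v w => J.D v w ∧ G.owner v = α ∧ J.H v = α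

/-- `Par_J v`: the parameters (unjustified nodes) reachable from `v` in `D`. -/
def Par (J : Justification G) (v : V) : Set V :=
  {w | Reaches J.D v w ∧ ¬ J.Justified w}

/-- The justification level of `v`: the minimal priority of a parameter
reachable from `v`, and `⊤` (`+∞`) if there is none. -/
def jl (J : Justification G) (v : V) : ℕ∞ :=
  sInf ((fun w => (G.pr w : ℕ∞)) '' J.Par v)

/-- The justification level of a direct justification: the minimum of the
justification levels of the targets of its edges. -/
def jlDJ (J : Justification G) (dj : Set (V × V)) : ℕ∞ :=
  sInf ((fun p : V × V => J.jl p.2) '' dj)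

/-- `J` is safe: winning, unjustified nodes have their default winner as
hypothesis, and the justification level of every node is at least its
priority. -/
def Safe (J : Justification G) : Prop :=
  J.Winning ∧ (∀ v, ¬ J.Justified v → J.H v = G.Hd v) ∧
    ∀ v, (G.pr v : ℕ∞) ≤ J.jl v

/-- `J[v : dj, α]`: replace the outgoing `D`-edges of `v` by `dj` and set
`H v := α`. -/
def update (J : Justification G) (v : V) (dj : Set (V × V)) (α : Fin 2) :
    Justification G where
  D := fun x y => if x = v then (x, y) ∈ dj else J.D x y
  H := fun x => if x = v then α else J.H x

/-- `J[v : ∅, Hf v | v ∈ S]`: remove the direct justification of every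
`v ∈ S` and set `H v := Hf v`. -/
def resetAll (J : Justification G) (S : Set V) (Hf : V → Fin 2) :
    Justification G where
  D := fun x y => if x ∈ S then False else J.D x y
  H := fun x => if x ∈ S then Hf x else J.H x

/-- `s_i(J)`: the number of justified nodes of justification level `i`. -/
def size (J : Justification G) (i : ℕ∞) : ℕ :=
  {v | J.Justified v ∧ J.jl v = i}.ncard

end Justification

/-- The preconditions of the operation `Justify(J, v, dj)`. -/
def Executable (G : ParityGame V) (J : Justification G) (v : V)
    (dj : Set (V × V)) : Prop :=
  J.Safe ∧ (∃ α, G.WinsDJ J.H v α dj) ∧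
    (if J.Justified v then J.jl v < J.jlDJ dj else J.jl v ≤ J.jlDJ dj)

/-- The operation `Justify(J, v, dj)`, where `α` is the player winning `v`
by `dj`: if `H v = α` this is `J[v : dj, α]`; otherwise all nodes reaching
`v` in `D` are reset to their default winner and then `v` gets `dj`. -/
def justify (G : ParityGame V) (J : Justification G) (v : V)
    (dj : Set (V × V)) (α : Fin 2) : Justification G :=
  if J.H v = α then J.update v dj α
  else (J.resetAll {w | Reaches J.D w v} G.Hd).update v dj α

/-- The empty justification `(V, ∅, H_d)`. -/
def Justification.empty (G : ParityGame V) : Justification G :=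
  ⟨fun _ _ => False, G.Hd⟩

/-- if `J` is weakly winning, `S` is closed under incoming
`D`-edges and `Hf` maps nodes of `S` to players, then
`J[v : ∅, Hf v | v ∈ S]` is weakly winning and has no cycle that is not
already a cycle of `J`. -/
theorem stmt_7 {V : Type*} [Fintype V] {G : ParityGame V}
    (J : Justification G) (hJ : J.WeaklyWinning) (S : Set V)
    (hS : ∀ v w, v ∈ S → J.D w v → w ∈ S) (Hf : V → Fin 2) :
    (J.resetAll S Hf).WeaklyWinning ∧
    ∀ (ρ : ℕ → V) (n : ℕ), IsCycle (J.resetAll S Hf).D ρ n →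
      IsCycle J.D ρ n := by
  have hD : ∀ x y, (J.resetAll S Hf).D x y → x ∉ S ∧ J.D x y := by
    intro x y h
    simp only [Justification.resetAll] at h
    by_cases hx : x ∈ S
    · simp [hx] at h
    · exact ⟨hx, by simpa [hx] using h⟩
  constructor
  · intro v hv
    obtain ⟨w, hw⟩ := hv
    obtain ⟨hvS, hvw⟩ := hD v w hw
    have hjust : J.Justified v := ⟨w, hvw⟩
    obtain ⟨hdj, hwin⟩ := hJ v hjust
    have hout : (J.resetAll S Hf).outEdges v = J.outEdges v := by
      ext p
      simp only [Justification.outEdges, Set.mem_setOf_eq, Justification.resetAll, hvS]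
      constructor
      · rintro ⟨h1, h2⟩; subst h1; simpa [hvS] using h2
      · rintro ⟨h1, h2⟩; subst h1; simp [hvS, h2]
    have hHv : (J.resetAll S Hf).H v = J.H v := by
      simp [Justification.resetAll, hvS]
    rw [hout, hHv]
    refine ⟨hdj, ?_⟩
    intro p hp
    have hp2 : J.D v p.2 := hp.2
    have hp2S : p.2 ∉ S := fun h => hvS (hS p.2 v h hp2)
    have := hwin p hp
    simpa [Justification.resetAll, hp2S] using this
  · rintro ρ n ⟨hn, hpath, hcl⟩
    exact ⟨hn, fun i hi => (hD _ _ (hpath i hi)).2, hcl⟩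

end ParityGame

end
end

section
/- Let J = (V, D, H) be a safe justification, v an unjustified node, and dj a direct justification that wins v for the opponent ᾱ of H(v) under H and satisfies jl(dj) ≥ jl(v). Then jl(dj) > Pr(v). -/
attribute [local instance] Classical.propDecidable

noncomputable section

namespace ParityGame

variable {V : Type*}

variable {G : ParityGame V}

/-- if `J` is safe, `v` is unjustified, and `dj` wins `v` for
the opponent of `H v` under `H` with `jl(dj) ≥ jl(v)`, then
`jl(dj) > Pr v`. -/
theorem stmt_11 {V : Type*} [Fintype V] {G : ParityGame V}
    (J : Justification G) (hJ : J.Safe) (v : V) (dj : Set (V × V))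
    (hunj : ¬ J.Justified v) (hwin : G.WinsDJ J.H v (1 - J.H v) dj)
    (hlev : J.jl v ≤ J.jlDJ dj) :
    (G.pr v : ℕ∞) < J.jlDJ dj := by
  by_contra hlt
  push_neg at hlt
  -- v is its own parameter, so jl v = Pr v
  have hvPar : v ∈ J.Par v := ⟨Relation.ReflTransGen.refl, hunj⟩
  have hjlv_le : J.jl v ≤ (G.pr v : ℕ∞) := sInf_le ⟨v, hvPar, rfl⟩
  have hjlv : J.jl v = (G.pr v : ℕ∞) := le_antisymm hjlv_le (hJ.2.2 v)
  have hdjeq : J.jlDJ dj = (G.pr v : ℕ∞) := le_antisymm hlt (hjlv ▸ hlev)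
  -- the infimum jlDJ dj is attained
  have hne : ((fun p : V × V => J.jl p.2) '' dj).Nonempty := by
    by_contra h
    rw [Set.not_nonempty_iff_eq_empty] at h
    have : J.jlDJ dj = ⊤ := by simp [Justification.jlDJ, h]
    rw [hdjeq] at this
    exact (ENat.coe_ne_top _) this
  obtain ⟨p, hp, hpjl⟩ := csInf_mem hne
  have hHw : J.H p.2 = 1 - J.H v := hwin.2 p hp
  have hjlw : J.jl p.2 = (G.pr v : ℕ∞) := hpjl.trans hdjeq
  -- the infimum jl p.2 is attained
  have hne2 : ((fun u : V => (G.pr u : ℕ∞)) '' J.Par p.2).Nonempty := by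
    by_contra h
    rw [Set.not_nonempty_iff_eq_empty] at h
    have : J.jl p.2 = ⊤ := by simp [Justification.jl, h]
    rw [hjlw] at this
    exact (ENat.coe_ne_top _) this
  obtain ⟨u, huPar, hupr⟩ := csInf_mem hne2
  have hpru : G.pr u = G.pr v := by
    have : (G.pr u : ℕ∞) = (G.pr v : ℕ∞) := hupr.trans hjlw
    exact_mod_cast this
  -- H is constant along D-paths
  have hconst : ∀ x y : V, Reaches J.D x y → J.H y = J.H x := by
    intro x y h
    induction h with
    | refl => rfl
    | tail hab hbc ih =>
      rename_i b c
      have hjust : J.Justified b := ⟨c, hbc⟩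
      have hw := hJ.1.1 b hjust
      have := hw.2 (b, c) ⟨rfl, hbc⟩
      simpa [this] using ih
  have hHu : J.H u = J.H p.2 := hconst _ _ huPar.1
  -- u and v are unjustified, so their hypotheses are the default ones
  have hHu' : J.H u = G.Hd u := hJ.2.1 u huPar.2
  have hHv' : J.H v = G.Hd v := hJ.2.1 v hunj
  have hHdeq : G.Hd u = G.Hd v := by simp [Hd, hpru]
  have : J.H v = 1 - J.H v := by
    calc J.H v = G.Hd v := hHv'
    _ = G.Hd u := hHdeq.symm
    _ = J.H u := hHu'.symm
    _ = J.H p.2 := hHu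
    _ = 1 - J.H v := hHw
  have hne' : ∀ a : Fin 2, a ≠ 1 - a := by decide
  exact hne' (J.H v) this

end ParityGame

end
end

section
/- Let J be a safe justification for a parity game PG that has at least one unjustified node. Then there exist a node v and a direct justification dj such that Justify(J, v, dj) is executable. In particular, if p is the minimal priority among unjustified nodes, then every unjustified node v with Pr(v) = p is justifiable with some direct justification dj that wins v for some player and has jl(dj) ≥ p. -/
attribute [local instance] Classical.propDecidable

noncomputable section

namespace ParityGame

variable {V : Type*}

variable {G : ParityGame V}

/-- if `J` is safe and has an unjustified node, then some node
is justifiable with some direct justification; in particular, if `p` is the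
minimal priority among unjustified nodes, every unjustified node of priority
`p` is justifiable with a direct justification that wins it for some player
and has justification level `≥ p`. -/
theorem stmt_13 {V : Type*} [Fintype V] {G : ParityGame V}
    (J : Justification G) (hsafe : J.Safe) (hunj : ∃ v, ¬ J.Justified v)
    (p : ℕ) (hp : IsLeast (G.pr '' {v | ¬ J.Justified v}) p) :
    (∃ v dj, Executable G J v dj) ∧
    ∀ v, ¬ J.Justified v → G.pr v = p →
      ∃ (dj : Set (V × V)) (α : Fin 2), G.WinsDJ J.H v α dj ∧
        (p : ℕ∞) ≤ J.jlDJ dj ∧ Executable G J v dj := by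
  have fin2 : ∀ a b : Fin 2, a ≠ b → a = b + 1 := by decide
  have fin2' : ∀ a : Fin 2, a ≠ a + 1 := by decide
  have keyA : ∀ w : V, (p : ℕ∞) ≤ J.jl w := by
    intro w
    refine le_sInf ?_
    rintro x ⟨u, ⟨-, hu⟩, rfl⟩
    exact_mod_cast Nat.cast_le.mpr (hp.2 ⟨u, hu, rfl⟩)
  have main : ∀ v, ¬ J.Justified v → G.pr v = p →
      ∃ (dj : Set (V × V)) (α : Fin 2), G.WinsDJ J.H v α dj ∧
        (p : ℕ∞) ≤ J.jlDJ dj ∧ Executable G J v dj := by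
    intro v hv hpv
    have hdj : ∃ dj α, G.WinsDJ J.H v α dj := by
      by_cases h : ∃ w, G.E v w ∧ J.H w = G.owner v
      · obtain ⟨w, hw, hHw⟩ := h
        refine ⟨{(v, w)}, G.owner v, ⟨fun _ => ⟨w, hw, rfl⟩,
          fun hc => absurd rfl hc⟩, ?_⟩
        rintro q hq
        rw [Set.mem_singleton_iff] at hq
        subst hq
        exact hHw
      · push_neg at h
        refine ⟨{q | q.1 = v ∧ G.E v q.2}, G.owner v + 1,
          ⟨fun hc => absurd hc (fin2' _), fun _ => rfl⟩, ?_⟩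
        rintro ⟨x, y⟩ ⟨rfl, he⟩
        exact fin2 _ _ (h y he)
    obtain ⟨dj, α, hwin⟩ := hdj
    have hjl : (p : ℕ∞) ≤ J.jlDJ dj := by
      refine le_sInf ?_
      rintro x ⟨q, -, rfl⟩
      exact keyA q.2
    have hjlv : J.jl v ≤ (p : ℕ∞) := by
      have hmem : (G.pr v : ℕ∞) ∈ (fun w => (G.pr w : ℕ∞)) '' J.Par v :=
        ⟨v, ⟨Relation.ReflTransGen.refl, hv⟩, rfl⟩
      have := sInf_le hmem
      rw [hpv] at this
      exact this
    refine ⟨dj, α, hwin, hjl, hsafe, ⟨α, hwin⟩, ?_⟩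
    rw [if_neg hv]
    exact hjlv.trans hjl
  constructor
  · obtain ⟨x, hx, hpx⟩ := hp.1
    obtain ⟨dj, α, -, -, hex⟩ := main x hx hpx
    exact ⟨x, dj, hex⟩
  · intro v hv hpv
    exact main v hv hpv

end ParityGame

end
end

section
/- Let J be a safe justification, v a node justifiable with direct justification dj, and J' = Justify(J, v, dj). Then s(J') > s(J) in the lexicographic order on justification sizes. -/
attribute [local instance] Classical.propDecidable

noncomputable section

namespace ParityGame

variable {V : Type*}

variable {G : ParityGame V}

section Aux

variable {G : ParityGame V}

private lemma reach_restrict {W : Type*} {A B : W → W → Prop} {S : Set W}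
    (himp : ∀ x y, x ∉ S → A x y → B x y)
    (hcl : ∀ x y, B x y → y ∈ S → x ∈ S)
    {w x : W} (h : Relation.ReflTransGen A w x) :
    w ∉ S → Relation.ReflTransGen B w x ∧ x ∉ S := by
  induction h using Relation.ReflTransGen.head_induction_on with
  | refl => exact fun hx => ⟨Relation.ReflTransGen.refl, hx⟩
  | head h' hrest ih =>
    intro ha
    have hb := himp _ _ ha h'
    obtain ⟨p, hx⟩ := ih (fun hcS => ha (hcl _ _ hb hcS))
    exact ⟨Relation.ReflTransGen.head hb p, hx⟩

private lemma reach_aux {W : Type*} {R R' : W → W → Prop} {v : W} {dj : Set (W × W)}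
    (h' : ∀ x y, R' x y → if x = v then (x, y) ∈ dj else R x y)
    {w x : W} (h : Relation.ReflTransGen R' w x) :
    Relation.ReflTransGen (fun a b => a ≠ v ∧ R a b) w x ∨
      (Relation.ReflTransGen (fun a b => a ≠ v ∧ R a b) w v ∧
        ∃ u, (v, u) ∈ dj ∧ Relation.ReflTransGen (fun a b => a ≠ v ∧ R a b) u x) := by
  induction h using Relation.ReflTransGen.head_induction_on with
  | refl => exact Or.inl Relation.ReflTransGen.refl
  | @head a c hac hcx ih =>
    by_cases ha : a = v
    · subst ha
      have hdjm : (a, c) ∈ dj := by have := h' a c hac; rwa [if_pos rfl] at this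
      rcases ih with h1 | ⟨h1, u, hu, h2⟩
      · exact Or.inr ⟨Relation.ReflTransGen.refl, c, hdjm, h1⟩
      · exact Or.inr ⟨Relation.ReflTransGen.refl, u, hu, h2⟩
    · have hR : R a c := by have := h' a c hac; rwa [if_neg ha] at this
      rcases ih with h1 | ⟨h1, u, hu, h2⟩
      · exact Or.inl (Relation.ReflTransGen.head ⟨ha, hR⟩ h1)
      · exact Or.inr ⟨Relation.ReflTransGen.head ⟨ha, hR⟩ h1, u, hu, h2⟩

private lemma H_eq_of_reaches {J : Justification G} (hw : J.WeaklyWinning)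
    {w x : V} (h : Relation.ReflTransGen J.D w x) : J.H x = J.H w := by
  induction h with
  | refl => rfl
  | @tail b c _ hstep ih =>
    have hb : J.Justified b := ⟨c, hstep⟩
    have := (hw b hb).2 (b, c) ⟨rfl, hstep⟩
    exact this.trans ih

private lemma jl_le_of_mem {J : Justification G} {w x : V} (hx : x ∈ J.Par w) :
    J.jl w ≤ (G.pr x : ℕ∞) := sInf_le ⟨x, hx, rfl⟩

private lemma jl_mono {J : Justification G} {w v : V} (h : Reaches J.D w v) :
    J.jl w ≤ J.jl v := by
  apply le_sInf
  rintro b ⟨x, ⟨hr, hu⟩, rfl⟩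
  exact jl_le_of_mem ⟨Relation.ReflTransGen.trans h hr, hu⟩

private lemma jlDJ_le {J : Justification G} {dj : Set (V × V)} {v u : V}
    (h : (v, u) ∈ dj) : J.jlDJ dj ≤ J.jl u := sInf_le ⟨(v, u), h, rfl⟩

private lemma jl_eq_pr_of_unjustified {J : Justification G} (hsafe : J.Safe) {v : V}
    (h : ¬ J.Justified v) : J.jl v = (G.pr v : ℕ∞) :=
  le_antisymm (jl_le_of_mem ⟨Relation.ReflTransGen.refl, h⟩) (hsafe.2.2 v)

end Aux

/-- if `J` is safe and `v` is justifiable with `dj` (the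
preconditions of `Justify(J, v, dj)` hold, `α` being the winning player),
then the size of `Justify(J, v, dj)` is strictly larger than the size of `J`
in the lexicographic order (higher justification levels being more
significant). -/
theorem stmt_14 {V : Type*} [Fintype V] {G : ParityGame V}
    (J : Justification G) (v : V) (dj : Set (V × V)) (α : Fin 2)
    (hsafe : J.Safe) (hwin : G.WinsDJ J.H v α dj)
    (hlev : if J.Justified v then J.jl v < J.jlDJ dj
            else J.jl v ≤ J.jlDJ dj) :
    ∃ i : ℕ∞, J.size i < (justify G J v dj α).size i ∧
      ∀ j : ℕ∞, i < j → (justify G J v dj α).size j = J.size j := by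
  obtain ⟨hdj, htar⟩ := hwin
  have hww : J.WeaklyWinning := hsafe.1.1
  have hdjne : ∃ u, (v, u) ∈ dj := by
    by_cases ho : G.owner v = α
    · obtain ⟨w, _, rfl⟩ := hdj.1 ho; exact ⟨w, rfl⟩
    · obtain ⟨w, hE⟩ := G.exists_succ v
      exact ⟨w, by rw [hdj.2 ho]; exact ⟨rfl, hE⟩⟩
  obtain ⟨u₀, hu₀⟩ := hdjne
  set J' := justify G J v dj α with hJ'def
  by_cases hα : J.H v = α
  · -- Case A : `H v = α`, no reset happens
    have hD' : ∀ x y, J'.D x y ↔ (if x = v then (x, y) ∈ dj else J.D x y) := by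
      intro x y
      rw [hJ'def]
      unfold justify
      rw [if_pos hα]
      exact Iff.rfl
    have hJv' : J'.Justified v := ⟨u₀, (hD' v u₀).mpr (by rw [if_pos rfl]; exact hu₀)⟩
    have hjust : ∀ w, w ≠ v → (J'.Justified w ↔ J.Justified w) := by
      intro w hwv
      constructor
      · rintro ⟨y, hy⟩; rw [hD', if_neg hwv] at hy; exact ⟨y, hy⟩
      · rintro ⟨y, hy⟩; exact ⟨y, (hD' w y).mpr (by rw [if_neg hwv]; exact hy)⟩
    have hjmono : ∀ w, J.Justified w → J'.Justified w := by
      intro w hw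
      by_cases hwv : w = v
      · exact hwv ▸ hJv'
      · exact (hjust w hwv).mpr hw
    have hRA : ∀ {w x : V}, Relation.ReflTransGen J'.D w x →
        Relation.ReflTransGen (fun a b => a ≠ v ∧ J.D a b) w x ∨
          (Relation.ReflTransGen (fun a b => a ≠ v ∧ J.D a b) w v ∧
            ∃ u, (v, u) ∈ dj ∧ Relation.ReflTransGen (fun a b => a ≠ v ∧ J.D a b) u x) :=
      fun h => reach_aux (fun a b hab => (hD' a b).mp hab) h
    have hR0 : ∀ {a b : V}, Relation.ReflTransGen (fun a b => a ≠ v ∧ J.D a b) a b →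
        Relation.ReflTransGen J.D a b :=
      fun h => Relation.ReflTransGen.mono (fun (a b : V) (hh : a ≠ v ∧ J.D a b) => hh.2) _ _ h
    have hPar' : ∀ w x, x ∈ J'.Par w →
        x ∈ J.Par w ∨ (Reaches J.D w v ∧ ∃ u, (v, u) ∈ dj ∧ x ∈ J.Par u) := by
      rintro w x ⟨hr, hu⟩
      have hxv : x ≠ v := fun h => hu (h ▸ hJv')
      have hux : ¬ J.Justified x := fun h => hu ((hjust x hxv).mpr h)
      rcases hRA hr with h1 | ⟨h1, u, hud, h2⟩
      · exact Or.inl ⟨hR0 h1, hux⟩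
      · exact Or.inr ⟨hR0 h1, u, hud, hR0 h2, hux⟩
    have hjlv_le : J.jl v ≤ J.jlDJ dj := by
      by_cases hJv : J.Justified v
      · rw [if_pos hJv] at hlev; exact hlev.le
      · rwa [if_neg hJv] at hlev
    have hmono : ∀ w, J.jl w ≤ J'.jl w := by
      intro w
      apply le_sInf
      rintro b ⟨x, hx, rfl⟩
      rcases hPar' w x hx with h | ⟨hwv, u, hud, hxu⟩
      · exact jl_le_of_mem h
      · exact le_trans (jl_mono hwv)
          (le_trans hjlv_le (le_trans (jlDJ_le hud) (jl_le_of_mem hxu)))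
    have hjlv' : J.jlDJ dj ≤ J'.jl v := by
      apply le_sInf
      rintro b ⟨x, hx, rfl⟩
      obtain ⟨hr, hu⟩ := hx
      have hxv : x ≠ v := fun h => hu (h ▸ hJv')
      rcases hRA hr with h1 | ⟨_, u, hud, h2⟩
      · exfalso
        rcases h1.cases_head with h | ⟨c, ⟨hne, _⟩, _⟩
        · exact hxv h.symm
        · exact hne rfl
      · have hux : ¬ J.Justified x := fun h => hu ((hjust x hxv).mpr h)
        exact le_trans (jlDJ_le hud) (jl_le_of_mem ⟨hR0 h2, hux⟩)
    set Δ : Set V := {w | J'.Justified w ∧ (¬ J.Justified w ∨ J'.jl w ≠ J.jl w)} with hΔdef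
    have hvΔ : v ∈ Δ := by
      refine ⟨hJv', ?_⟩
      by_cases hJv : J.Justified v
      · right
        rw [if_pos hJv] at hlev
        exact (lt_of_lt_of_le hlev hjlv').ne'
      · exact Or.inl hJv
    obtain ⟨w₀, hw₀, hmax'⟩ :=
      Set.Finite.exists_maximalFor J'.jl Δ (Set.toFinite Δ) ⟨v, hvΔ⟩
    have hmax : ∀ a ∈ Δ, J'.jl a ≤ J'.jl w₀ := by
      intro a ha
      by_contra h
      push_neg at h
      exact absurd (hmax' ha h.le) (not_le.mpr h)
    have heq : ∀ j, J'.jl w₀ < j →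
        {w | J'.Justified w ∧ J'.jl w = j} = {w | J.Justified w ∧ J.jl w = j} := by
      intro j hj
      ext w
      simp only [Set.mem_setOf_eq]
      constructor
      · rintro ⟨hw, rfl⟩
        have hwΔ : w ∉ Δ := fun h => absurd (hmax w h) (not_le.mpr hj)
        rw [hΔdef, Set.mem_setOf_eq] at hwΔ
        push_neg at hwΔ
        obtain ⟨h1, h2⟩ := hwΔ hw
        exact ⟨h1, h2.symm⟩
      · rintro ⟨hw, rfl⟩
        refine ⟨hjmono w hw, ?_⟩
        rcases eq_or_lt_of_le (hmono w) with h | h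
        · exact h.symm
        · exfalso
          have hwΔ : w ∈ Δ := ⟨hjmono w hw, Or.inr h.ne'⟩
          exact absurd (hmax w hwΔ) (not_le.mpr (lt_trans hj h))
    have hsubset : {w | J.Justified w ∧ J.jl w = J'.jl w₀} ⊆
        {w | J'.Justified w ∧ J'.jl w = J'.jl w₀} := by
      rintro w ⟨hw, hjl⟩
      refine ⟨hjmono w hw, ?_⟩
      rcases eq_or_lt_of_le (hmono w) with h | h
      · rw [← h, hjl]
      · exfalso
        have hwΔ : w ∈ Δ := ⟨hjmono w hw, Or.inr h.ne'⟩
        exact absurd (hmax w hwΔ) (not_le.mpr (hjl ▸ h))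
    have hsub : {w | J.Justified w ∧ J.jl w = J'.jl w₀} ⊂
        {w | J'.Justified w ∧ J'.jl w = J'.jl w₀} := by
      rw [Set.ssubset_iff_of_subset hsubset]
      refine ⟨w₀, ⟨hw₀.1, rfl⟩, ?_⟩
      rintro ⟨hjw, hjl⟩
      rcases hw₀.2 with h | h
      · exact h hjw
      · exact h hjl.symm
    refine ⟨J'.jl w₀, Set.ncard_lt_ncard hsub (Set.toFinite _), ?_⟩
    intro j hj
    show {w | J'.Justified w ∧ J'.jl w = j}.ncard = {w | J.Justified w ∧ J.jl w = j}.ncard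
    rw [heq j hj]
  · -- Case B : `H v ≠ α`, the nodes reaching `v` get reset
    set S : Set V := {w | Reaches J.D w v} with hSdef
    have hD' : ∀ x y, J'.D x y ↔
        (if x = v then (x, y) ∈ dj else if x ∈ S then False else J.D x y) := by
      intro x y
      rw [hJ'def]
      unfold justify
      rw [if_neg hα]
      exact Iff.rfl
    have hvS : v ∈ S := Relation.ReflTransGen.refl
    have hJv' : J'.Justified v := ⟨u₀, (hD' v u₀).mpr (by rw [if_pos rfl]; exact hu₀)⟩
    -- `v` is unjustified in `J`
    have hJv : ¬ J.Justified v := by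
      rintro ⟨y, hvy⟩
      have hwdj := hww v ⟨y, hvy⟩
      by_cases ho : G.owner v = α
      · obtain ⟨w, hE, hdjeq⟩ := hdj.1 ho
        have hne : G.owner v ≠ J.H v := by rw [ho]; exact fun h => hα h.symm
        have hout := hwdj.1.2 hne
        have hHw : J.H w = J.H v := hwdj.2 (v, w) (by rw [hout]; exact ⟨rfl, hE⟩)
        have hHw' : J.H w = α := htar (v, w) (by rw [hdjeq]; rfl)
        exact hα (hHw.symm.trans hHw')
      · have hdjeq := hdj.2 ho
        by_cases ho2 : G.owner v = J.H v
        · obtain ⟨w, hE, hout⟩ := hwdj.1.1 ho2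
          have hHw : J.H w = J.H v := hwdj.2 (v, w) (by rw [hout]; rfl)
          have hHw' : J.H w = α := htar (v, w) (by rw [hdjeq]; exact ⟨rfl, hE⟩)
          exact hα (hHw.symm.trans hHw')
        · have hout := hwdj.1.2 ho2
          have hEy : G.E v y := by
            have hmem : (v, y) ∈ J.outEdges v := ⟨rfl, hvy⟩
            rw [hout] at hmem
            exact hmem.2
          have hHy : J.H y = J.H v := hwdj.2 (v, y) ⟨rfl, hvy⟩
          have hHy' : J.H y = α := htar (v, y) (by rw [hdjeq]; exact ⟨rfl, hEy⟩)
          exact hα (hHy.symm.trans hHy')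
    rw [if_neg hJv] at hlev
    have hjlv : J.jl v = (G.pr v : ℕ∞) := jl_eq_pr_of_unjustified hsafe hJv
    have hHdv : J.H v = G.Hd v := hsafe.2.1 v hJv
    have hprop : ∀ {w x : V}, Relation.ReflTransGen J.D w x → J.H x = J.H w :=
      fun h => H_eq_of_reaches hww h
    have htarS : ∀ u, (v, u) ∈ dj → u ∉ S := by
      intro u hu huS
      exact hα ((hprop huS).trans (htar (v, u) hu))
    have hSclR : ∀ x y, J.D x y → y ∈ S → x ∈ S :=
      fun x y h hy => Relation.ReflTransGen.head h hy
    have hSclR' : ∀ x y, J'.D x y → y ∈ S → x ∈ S := by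
      intro x y h hy
      by_cases hx : x = v
      · exact hx ▸ hvS
      · by_cases hxS : x ∈ S
        · exact hxS
        · rw [hD', if_neg hx, if_neg hxS] at h
          exact hSclR x y h hy
    have himp1 : ∀ x y, x ∉ S → J'.D x y → J.D x y := by
      intro x y hx h
      have hxv : x ≠ v := fun he => hx (he ▸ hvS)
      rwa [hD', if_neg hxv, if_neg hx] at h
    have himp2 : ∀ x y, x ∉ S → J.D x y → J'.D x y := by
      intro x y hx h
      have hxv : x ≠ v := fun he => hx (he ▸ hvS)
      rw [hD', if_neg hxv, if_neg hx]
      exact h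
    have hout1 : ∀ {w x : V}, Relation.ReflTransGen J'.D w x → w ∉ S →
        Relation.ReflTransGen J.D w x ∧ x ∉ S :=
      fun h hw => reach_restrict himp1 hSclR h hw
    have hout2 : ∀ {w x : V}, Relation.ReflTransGen J.D w x → w ∉ S →
        Relation.ReflTransGen J'.D w x ∧ x ∉ S :=
      fun h hw => reach_restrict himp2 hSclR' h hw
    have hjust_out : ∀ x, x ∉ S → (J'.Justified x ↔ J.Justified x) := by
      intro x hx
      constructor
      · rintro ⟨y, hy⟩; exact ⟨y, himp1 x y hx hy⟩
      · rintro ⟨y, hy⟩; exact ⟨y, himp2 x y hx hy⟩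
    have hpar_out : ∀ w, w ∉ S → J'.Par w = J.Par w := by
      intro w hw
      ext x
      constructor
      · rintro ⟨hr, hu⟩
        obtain ⟨hr', hx⟩ := hout1 hr hw
        exact ⟨hr', fun h => hu ((hjust_out x hx).mpr h)⟩
      · rintro ⟨hr, hu⟩
        obtain ⟨hr', hx⟩ := hout2 hr hw
        exact ⟨hr', fun h => hu ((hjust_out x hx).mp h)⟩
    have hjl_out : ∀ w, w ∉ S → J'.jl w = J.jl w := by
      intro w hw
      unfold Justification.jl
      rw [hpar_out w hw]
    have hunj_in : ∀ w, w ∈ S → w ≠ v → ¬ J'.Justified w := by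
      rintro w hwS hwv ⟨y, hy⟩
      rw [hD', if_neg hwv, if_pos hwS] at hy
      exact hy
    -- every parameter of `v` in `J'` has priority strictly above `pr v`
    have hkey : ∀ x ∈ J'.Par v, (G.pr v : ℕ∞) < (G.pr x : ℕ∞) := by
      rintro x ⟨hr, hu⟩
      have hxv : x ≠ v := fun h => hu (h ▸ hJv')
      rcases hr.cases_head with h | ⟨c, hvc, hcx⟩
      · exact absurd h.symm hxv
      · have hcd : (v, c) ∈ dj := by rwa [hD', if_pos rfl] at hvc
        have hcS : c ∉ S := htarS c hcd
        obtain ⟨hcx', hxS⟩ := hout1 hcx hcS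
        have hxJ : ¬ J.Justified x := fun h => hu ((hjust_out x hxS).mpr h)
        have h1 : (G.pr v : ℕ∞) ≤ (G.pr x : ℕ∞) := by
          calc (G.pr v : ℕ∞) = J.jl v := hjlv.symm
            _ ≤ J.jlDJ dj := hlev
            _ ≤ J.jl c := jlDJ_le hcd
            _ ≤ _ := jl_le_of_mem ⟨hcx', hxJ⟩
        have hHx : J.H x = α := (hprop hcx').trans (htar (v, c) hcd)
        have hpx : G.Hd x = α := by
          have hx2 := hsafe.2.1 x hxJ
          rw [hx2] at hHx
          exact hHx
        have hpv : G.Hd v ≠ α := hHdv ▸ hα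
        have hne : G.pr x ≠ G.pr v := by
          intro h
          refine hpv ?_
          unfold Hd at hpx ⊢
          rw [← h]
          exact hpx
        have hle : G.pr v ≤ G.pr x := by exact_mod_cast h1
        exact_mod_cast lt_of_le_of_ne hle (Ne.symm hne)
    have hgt : J.jl v < J'.jl v := by
      rw [hjlv]
      have h1 : ((G.pr v + 1 : ℕ) : ℕ∞) ≤ J'.jl v := by
        apply le_sInf
        rintro b ⟨x, hx, rfl⟩
        have h2 : G.pr v < G.pr x := by exact_mod_cast hkey x hx
        show ((G.pr v + 1 : ℕ) : ℕ∞) ≤ (G.pr x : ℕ∞)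
        exact_mod_cast h2
      exact lt_of_lt_of_le (by exact_mod_cast Nat.lt_succ_self (G.pr v)) h1
    have hjlS : ∀ w, w ∈ S → J.jl w ≤ J.jl v := fun w hw => jl_mono hw
    have heq : ∀ j, J'.jl v < j →
        {w | J'.Justified w ∧ J'.jl w = j} = {w | J.Justified w ∧ J.jl w = j} := by
      intro j hj
      ext w
      simp only [Set.mem_setOf_eq]
      constructor
      · rintro ⟨hw, rfl⟩
        by_cases hwv : w = v
        · subst hwv; exact absurd hj (lt_irrefl _)
        · by_cases hwS : w ∈ S
          · exact absurd hw (hunj_in w hwS hwv)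
          · rw [hjl_out w hwS]
            exact ⟨(hjust_out w hwS).mp hw, rfl⟩
      · rintro ⟨hw, rfl⟩
        have hwS : w ∉ S := by
          intro hwS
          have hcon : J'.jl v < J'.jl v :=
            lt_of_lt_of_le hj (le_trans (hjlS w hwS) hgt.le)
          exact absurd hcon (lt_irrefl _)
        exact ⟨(hjust_out w hwS).mpr hw, hjl_out w hwS⟩
    have hsubset : {w | J.Justified w ∧ J.jl w = J'.jl v} ⊆
        {w | J'.Justified w ∧ J'.jl w = J'.jl v} := by
      rintro w ⟨hw, hjl⟩
      have hwS : w ∉ S := by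
        intro hwS
        exact absurd hjl (ne_of_lt (lt_of_le_of_lt (hjlS w hwS) hgt))
      refine ⟨(hjust_out w hwS).mpr hw, ?_⟩
      rw [hjl_out w hwS]
      exact hjl
    have hsub : {w | J.Justified w ∧ J.jl w = J'.jl v} ⊂
        {w | J'.Justified w ∧ J'.jl w = J'.jl v} := by
      rw [Set.ssubset_iff_of_subset hsubset]
      refine ⟨v, ⟨hJv', rfl⟩, ?_⟩
      rintro ⟨hw, _⟩
      exact hJv hw
    refine ⟨J'.jl v, Set.ncard_lt_ncard hsub (Set.toFinite _), ?_⟩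
    intro j hj
    show {w | J'.Justified w ∧ J'.jl w = j}.ncard = {w | J.Justified w ∧ J.jl w = j}.ncard
    rw [heq j hj]

end ParityGame

end
end

section
/- Let J = J[v : dj, α] be obtained from a safe justification J₀ = (V, D, H) by an executable Justify step in the case H(v) = α (i.e., dj wins v for H(v) under H and jl(dj) ≥ jl(v) if v is unjustified, jl(dj) > jl(v) if v is justified). Then for every node w, jl_{J}(w) ≥ jl_{J₀}(w): no node's justification level decreases. -/
attribute [local instance] Classical.propDecidable

noncomputable section

namespace ParityGame

variable {V : Type*}

variable {G : ParityGame V}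

theorem jl_le_of_reaches' {G : ParityGame V} (J : Justification G) {w v : V}
    (h : Reaches J.D w v) : J.jl w ≤ J.jl v := by
  apply sInf_le_sInf
  apply Set.image_mono
  intro u hu
  exact ⟨h.trans hu.1, hu.2⟩

/-- if `J₀` is safe and `J = J₀[v : dj, α]` results from an
executable `Justify` step in the case `H v = α` (i.e. `dj` wins `v` for
`H v` under `H` and `jl(dj) ≥ jl(v)` if `v` is unjustified, `jl(dj) > jl(v)`
if `v` is justified), then no node's justification level decreases. -/
theorem stmt_15 {V : Type*} [Fintype V] {G : ParityGame V}
    (J : Justification G) (hsafe : J.Safe) (v : V) (dj : Set (V × V))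
    (hwin : G.WinsDJ J.H v (J.H v) dj)
    (hlev : if J.Justified v then J.jl v < J.jlDJ dj
            else J.jl v ≤ J.jlDJ dj) :
    ∀ w, J.jl w ≤ (J.update v dj (J.H v)).jl w := by
  intro w
  set J' := J.update v dj (J.H v) with hJ'
  have hdjne : ∃ z, (v, z) ∈ dj := by
    obtain ⟨⟨h1, h2⟩, _⟩ := hwin
    by_cases ho : G.owner v = J.H v
    · obtain ⟨z, _, hz⟩ := h1 ho
      exact ⟨z, by rw [hz]; rfl⟩
    · obtain ⟨z, hz⟩ := G.exists_succ v
      exact ⟨z, by rw [h2 ho]; exact ⟨rfl, hz⟩⟩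
  have hvJ' : J'.Justified v := by
    obtain ⟨z, hz⟩ := hdjne
    exact ⟨z, by simp [hJ', Justification.update, hz]⟩
  have hjlv : J.jl v ≤ J.jlDJ dj := by
    by_cases h : J.Justified v
    · simp only [h, if_true] at hlev; exact le_of_lt hlev
    · simp only [h, if_false] at hlev; exact hlev
  have key : ∀ x u, Reaches J'.D x u → ¬ J'.Justified u →
      u ∈ J.Par x ∨ (Reaches J.D x v ∧ ∃ z, (v, z) ∈ dj ∧ u ∈ J.Par z) := by
    intro x u hreach hunj
    have hune : u ≠ v := fun h => hunj (h ▸ hvJ')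
    have hunjJ : ¬ J.Justified u := by
      rintro ⟨y, hy⟩
      exact hunj ⟨y, by simp [hJ', Justification.update, hune, hy]⟩
    induction hreach using Relation.ReflTransGen.head_induction_on with
    | refl => exact Or.inl ⟨Relation.ReflTransGen.refl, hunjJ⟩
    | head h' hr ih =>
      rename_i a c
      by_cases ha : a = v
      · subst ha
        have hmem : (a, c) ∈ dj := by
          simpa [hJ', Justification.update] using h'
        rcases ih with hc | ⟨_, z, hz, hp⟩
        · exact Or.inr ⟨Relation.ReflTransGen.refl, c, hmem, hc⟩
        · exact Or.inr ⟨Relation.ReflTransGen.refl, z, hz, hp⟩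
      · have hD : J.D a c := by
          simpa [hJ', Justification.update, ha] using h'
        rcases ih with hc | ⟨hcv, z, hz, hp⟩
        · exact Or.inl ⟨Relation.ReflTransGen.head hD hc.1, hc.2⟩
        · exact Or.inr ⟨Relation.ReflTransGen.head hD hcv, z, hz, hp⟩
  apply le_sInf
  rintro b ⟨u, ⟨hreach, hunj⟩, rfl⟩
  rcases key w u hreach hunj with h | ⟨hwv, z, hz, hu⟩
  · exact sInf_le ⟨u, h, rfl⟩
  · calc J.jl w ≤ J.jl v := jl_le_of_reaches' J hwv
      _ ≤ J.jlDJ dj := hjlv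
      _ ≤ J.jl z := sInf_le ⟨(v, z), hz, rfl⟩
      _ ≤ _ := sInf_le ⟨u, hu, rfl⟩

end ParityGame

end
end
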